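/- Let A ∈ ℝ^{N×N} be stable, B ∈ ℝ^{N×m}, C ∈ ℝ^{q×N}, and let X be the unique solution of the Lyapunov equation AX + XAᵀ = −BBᵀ. If Tr(CᵀC · X) = 0, then C·exp(At)·B = 0 for all t ≥ 0; in particular CB = 0. -/

import Mathlib

open Matrix NormedSpace Filter Topology

attribute [local instance] Matrix.linftyOpSemiNormedRing Matrix.linftyOpNormedRing
  Matrix.linftyOpNormedAlgebra

lemma aux_poly_exp (j : ℕ) {b : ℝ} (hb : b < 0) :
    Tendsto (fun t : ℝ => t ^ j * Real.exp (b * t)) atTop (𝓝 0) := by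
  have h1 : Tendsto (fun t : ℝ => (-b) * t) atTop atTop :=
    Tendsto.const_mul_atTop (by linarith) tendsto_id
  have h2 := (Real.tendsto_pow_mul_exp_neg_atTop_nhds_zero j).comp h1
  have h3 := h2.const_mul (((-b) ^ j)⁻¹)
  rw [mul_zero] at h3
  refine h3.congr fun t => ?_
  have hbj : ((-b) ^ j) ≠ 0 := pow_ne_zero _ (by linarith)
  simp only [Function.comp_apply, mul_pow, neg_neg]
  field_simp

lemma exp_mulVec_genEig {n : Type*} [Fintype n] [DecidableEq n]
    (K : Matrix n n ℂ) (μ : ℂ) (hμ : μ.re < 0) (k : ℕ) (v : n → ℂ)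
    (hv : ((K - μ • 1) ^ k) *ᵥ v = 0) :
    Tendsto (fun t : ℝ => exp ((t : ℂ) • K) *ᵥ v) atTop (𝓝 0) := by
  set Nl : Matrix n n ℂ := K - μ • 1 with hNl
  -- splitting of the exponential
  have hsplit : ∀ t : ℝ, exp ((t : ℂ) • K) = Complex.exp (t * μ) • exp ((t : ℂ) • Nl) := by
    intro t
    have hdecomp : (t : ℂ) • K = ((t : ℂ) * μ) • (1 : Matrix n n ℂ) + (t : ℂ) • Nl := by
      rw [hNl, smul_sub, mul_smul]
      abel
    have hcomm : Commute (((t : ℂ) * μ) • (1 : Matrix n n ℂ)) ((t : ℂ) • Nl) :=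
      ((Commute.one_left _).smul_left _).smul_right _
    rw [hdecomp, Matrix.exp_add_of_commute _ _ hcomm]
    have h1 : (((t : ℂ) * μ) • (1 : Matrix n n ℂ)) = algebraMap ℂ _ ((t : ℂ) * μ) := by
      rw [Algebra.algebraMap_eq_smul_one]
    have h2 : exp (algebraMap ℂ (Matrix n n ℂ) ((t : ℂ) * μ))
        = algebraMap ℂ _ (exp ((t : ℂ) * μ)) := (algebraMap_exp_comm _).symm
    rw [h1, h2, ← Complex.exp_eq_exp_ℂ, Algebra.algebraMap_eq_smul_one,
      smul_mul_assoc, one_mul]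
  -- the continuous linear map `M ↦ M *ᵥ v`
  let L : Matrix n n ℂ →ₗ[ℂ] (n → ℂ) :=
    { toFun := fun M => M *ᵥ v
      map_add' := fun M N => Matrix.add_mulVec M N v
      map_smul' := fun c M => Matrix.smul_mulVec c M v }
  let Lc : Matrix n n ℂ →L[ℂ] (n → ℂ) := LinearMap.toContinuousLinearMap L
  have hfin : ∀ t : ℝ, exp ((t : ℂ) • Nl) *ᵥ v
      = ∑ j ∈ Finset.range k, (((j.factorial : ℂ))⁻¹ * (t : ℂ) ^ j) • (Nl ^ j *ᵥ v) := by
    intro t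
    have hsum : exp ((t : ℂ) • Nl) *ᵥ v
        = ∑' j : ℕ, (((j.factorial : ℂ))⁻¹ • ((t : ℂ) • Nl) ^ j) *ᵥ v := by
      have : exp ((t : ℂ) • Nl) = ∑' j : ℕ, ((j.factorial : ℂ))⁻¹ • ((t : ℂ) • Nl) ^ j := by
        rw [exp_eq_tsum (𝕂 := ℂ)]
      rw [this]
      exact Lc.map_tsum (expSeries_summable' ((t : ℂ) • Nl))
    rw [hsum]
    have hterm : ∀ j : ℕ, (((j.factorial : ℂ))⁻¹ • ((t : ℂ) • Nl) ^ j) *ᵥ v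
        = (((j.factorial : ℂ))⁻¹ * (t : ℂ) ^ j) • (Nl ^ j *ᵥ v) := by
      intro j
      rw [smul_pow, smul_smul, Matrix.smul_mulVec]
    have hzero : ∀ j ∉ Finset.range k, (((j.factorial : ℂ))⁻¹ • ((t : ℂ) • Nl) ^ j) *ᵥ v = 0 := by
      intro j hj
      rw [Finset.mem_range, not_lt] at hj
      rw [hterm j]
      have : Nl ^ j *ᵥ v = 0 := by
        have : Nl ^ j = Nl ^ (j - k) * Nl ^ k := by rw [← pow_add]; congr 1; omega
        rw [this, ← Matrix.mulVec_mulVec, hv, Matrix.mulVec_zero]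
      rw [this, smul_zero]
    rw [tsum_eq_sum hzero]
    exact Finset.sum_congr rfl fun j _ => hterm j
  -- combine
  have heq : ∀ t : ℝ, exp ((t : ℂ) • K) *ᵥ v
      = ∑ j ∈ Finset.range k,
          (Complex.exp (t * μ) * (((j.factorial : ℂ))⁻¹ * (t : ℂ) ^ j)) • (Nl ^ j *ᵥ v) := by
    intro t
    rw [hsplit t, Matrix.smul_mulVec, hfin t, Finset.smul_sum]
    exact Finset.sum_congr rfl fun j _ => by rw [smul_smul]
  simp only [heq]
  rw [show (0 : n → ℂ) = ∑ j ∈ Finset.range k, (0 : n → ℂ) by simp]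
  refine tendsto_finset_sum _ fun j _ => ?_
  rw [show (0 : n → ℂ) = (0 : ℂ) • (Nl ^ j *ᵥ v) by simp]
  refine Tendsto.smul_const ?_ _
  -- scalar tendsto zero
  rw [tendsto_zero_iff_norm_tendsto_zero]
  have hbound : ∀ᶠ t : ℝ in atTop,
      ‖Complex.exp (t * μ) * (((j.factorial : ℂ))⁻¹ * (t : ℂ) ^ j)‖
        ≤ ((j.factorial : ℝ))⁻¹ * (t ^ j * Real.exp (μ.re * t)) := by
    filter_upwards [eventually_ge_atTop (0 : ℝ)] with t ht
    have heqn : ‖Complex.exp (t * μ) * (((j.factorial : ℂ))⁻¹ * (t : ℂ) ^ j)‖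
        = Real.exp (μ.re * t) * (((j.factorial : ℝ))⁻¹ * t ^ j) := by
      rw [norm_mul, norm_mul, norm_pow, Complex.norm_exp, norm_inv, Complex.norm_natCast,
        Complex.norm_real, Real.norm_eq_abs, abs_of_nonneg ht]
      congr 1
      simp [Complex.mul_re, mul_comm]
    rw [heqn]
    exact le_of_eq (by ring)
  have hlim := (aux_poly_exp j hμ).const_mul (((j.factorial : ℝ))⁻¹)
  rw [mul_zero] at hlim
  exact squeeze_zero_norm' (hbound.mono fun t h => by simpa using h) hlim

lemma exp_mulVec_tendsto_zero {n : Type*} [Fintype n] [DecidableEq n]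
    (K : Matrix n n ℂ) (hK : ∀ z ∈ spectrum ℂ K, z.re < 0) (v : n → ℂ) :
    Tendsto (fun t : ℝ => exp ((t : ℂ) • K) *ᵥ v) atTop (𝓝 0) := by
  set f : Module.End ℂ (n → ℂ) := Matrix.toLinAlgEquiv' K with hf
  have hsp : ⨆ μ : ℂ, f.maxGenEigenspace μ = ⊤ := Module.End.iSup_maxGenEigenspace_eq_top f
  have hv : v ∈ ⨆ μ : ℂ, f.maxGenEigenspace μ := hsp ▸ Submodule.mem_top
  refine Submodule.iSup_induction (motive := fun w =>
      Tendsto (fun t : ℝ => exp ((t : ℂ) • K) *ᵥ w) atTop (𝓝 0)) _ hv ?_ ?_ ?_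
  · intro μ w hw
    rcases (Module.End.mem_maxGenEigenspace f μ w).mp hw with ⟨k, hk⟩
    by_cases hw0 : w = 0
    · simpa [hw0] using tendsto_const_nhds
    · have hμspec : μ ∈ spectrum ℂ K := by
        have hgen : f.HasGenEigenvalue μ k := by
          rw [Module.End.hasGenEigenvalue_iff]
          exact Submodule.ne_bot_iff _ |>.mpr
            ⟨w, (Module.End.mem_genEigenspace_nat).mpr hk, hw0⟩
        have heig : f.HasEigenvalue μ := Module.End.hasEigenvalue_of_hasGenEigenvalue hgen
        have := Module.End.hasEigenvalue_iff_mem_spectrum.mp heig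
        rwa [hf, AlgEquiv.spectrum_eq Matrix.toLinAlgEquiv' K] at this
      have hker : ((K - μ • 1) ^ k) *ᵥ w = 0 := by
        rw [← Matrix.toLinAlgEquiv'_apply]
        have hcongr : Matrix.toLinAlgEquiv' ((K - μ • 1) ^ k) = (f - μ • 1) ^ k := by
          rw [map_pow, map_sub, hf]
          congr 1
          rw [_root_.map_smul, _root_.map_one]
        rw [hcongr, hk]
      exact exp_mulVec_genEig K μ (hK μ hμspec) k w hker
  · simpa using tendsto_const_nhds
  · intro x y hx hy
    have := hx.add hy
    simpa [Matrix.mulVec_add] using this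

lemma exp_real_tendsto_zero {n : Type*} [Fintype n] [DecidableEq n]
    (A : Matrix n n ℝ) (hA : ∀ z ∈ spectrum ℂ (A.map (Complex.ofReal ·)), z.re < 0) :
    Tendsto (fun t : ℝ => exp (t • A)) atTop (𝓝 0) := by
  set K : Matrix n n ℂ := A.map (Complex.ofReal ·) with hK
  set φ : Matrix n n ℝ →+* Matrix n n ℂ := (Complex.ofRealHom).mapMatrix with hφ
  have hφcont : Continuous φ := by
    exact Continuous.matrix_map continuous_id Complex.continuous_ofReal
  have hmap : ∀ t : ℝ, (exp (t • A)).map (Complex.ofReal ·) = exp ((t : ℂ) • K) := by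
    intro t
    have h1 : φ (exp (t • A)) = exp (φ (t • A)) := map_exp φ hφcont _
    have h2 : φ (t • A) = (t : ℂ) • K := by
      ext i j
      simp [hφ, hK, RingHom.mapMatrix_apply, Matrix.map_apply]
    have h3 : (exp : Matrix n n ℂ → Matrix n n ℂ) = exp := rfl
    calc (exp (t • A)).map (Complex.ofReal ·) = φ (exp (t • A)) := rfl
      _ = exp ((t : ℂ) • K) := by rw [h1, h2]
      _ = exp ((t : ℂ) • K) := by rw [h3]
  refine tendsto_pi_nhds.mpr ?_
  intro i
  rw [tendsto_pi_nhds]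
  intro j
  have hcj : Tendsto (fun t : ℝ => exp ((t : ℂ) • K) *ᵥ (Pi.single j 1)) atTop (𝓝 0) :=
    exp_mulVec_tendsto_zero K hA _
  have hcij : Tendsto (fun t : ℝ => (exp ((t : ℂ) • K) *ᵥ (Pi.single j 1)) i) atTop (𝓝 0) := by
    have := (tendsto_pi_nhds.mp hcj) i
    simpa using this
  have hentry : ∀ t : ℝ, (exp ((t : ℂ) • K) *ᵥ (Pi.single j 1)) i
      = ((exp (t • A)) i j : ℂ) := by
    intro t
    rw [← hmap t]
    simp [Matrix.mulVec_single, Matrix.map_apply]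
  simp only [hentry] at hcij
  have := (Complex.continuous_re.tendsto 0).comp hcij
  simpa [Function.comp_def] using this

lemma trace_mul_transpose_eq {p r : Type*} [Fintype p] [Fintype r] (M : Matrix p r ℝ) :
    Matrix.trace (M * Mᵀ) = ∑ i, ∑ j, (M i j) ^ 2 := by
  simp [Matrix.trace, Matrix.mul_apply, Matrix.diag, sq]

lemma eq_zero_of_trace_mul_transpose {p r : Type*} [Fintype p] [Fintype r]
    (M : Matrix p r ℝ) (h : Matrix.trace (M * Mᵀ) = 0) : M = 0 := by
  rw [trace_mul_transpose_eq] at h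
  ext i j
  have h1 : ∀ i ∈ Finset.univ, (0:ℝ) ≤ ∑ j, M i j ^ 2 := fun i _ =>
    Finset.sum_nonneg fun j _ => sq_nonneg _
  have h2 := (Finset.sum_eq_zero_iff_of_nonneg h1).mp h i (Finset.mem_univ i)
  have h3 := (Finset.sum_eq_zero_iff_of_nonneg (fun j _ => sq_nonneg (M i j))).mp h2 j
    (Finset.mem_univ j)
  simpa [pow_eq_zero_iff] using h3

lemma trace_mul_transpose_nonneg {p r : Type*} [Fintype p] [Fintype r] (M : Matrix p r ℝ) :
    0 ≤ Matrix.trace (M * Mᵀ) := by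
  rw [trace_mul_transpose_eq]
  exact Finset.sum_nonneg fun i _ => Finset.sum_nonneg fun j _ => sq_nonneg _

/-- A real square matrix is stable if every eigenvalue (as a complex matrix)
has negative real part. -/
def Matrix.IsStable {n : Type*} [Fintype n] [DecidableEq n] (A : Matrix n n ℝ) : Prop :=
  ∀ z ∈ spectrum ℂ (A.map (Complex.ofReal · )), z.re < 0

theorem trace_zero_implies_zero_response (N m q : ℕ)
    (A : Matrix (Fin N) (Fin N) ℝ) (hA : A.IsStable)
    (B : Matrix (Fin N) (Fin m) ℝ) (C : Matrix (Fin q) (Fin N) ℝ)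
    (X : Matrix (Fin N) (Fin N) ℝ)
    (hX : A * X + X * Aᵀ = -(B * Bᵀ))
    (htr : Matrix.trace (Cᵀ * C * X) = 0) :
    (∀ t : ℝ, 0 ≤ t → C * NormedSpace.exp (t • A) * B = 0) ∧ C * B = 0 := by
  classical
  set E : ℝ → Matrix (Fin N) (Fin N) ℝ := fun t => exp (t • A) with hE
  set F : ℝ → Matrix (Fin N) (Fin N) ℝ := fun t => exp (t • Aᵀ) with hF
  have hFT : ∀ t, F t = (E t)ᵀ := by
    intro t
    rw [hF, hE]
    simp only
    rw [← Matrix.transpose_smul, Matrix.exp_transpose]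
  set M : ℝ → Matrix (Fin q) (Fin m) ℝ := fun t => C * E t * B with hM
  set h : ℝ → ℝ := fun t => Matrix.trace (Cᵀ * C * (E t * X * F t)) with hh
  -- derivatives
  have hdE : ∀ t, HasDerivAt E (A * E t) t := fun t => hasDerivAt_exp_smul_const' A t
  have hdF : ∀ t, HasDerivAt F (F t * Aᵀ) t := fun t => hasDerivAt_exp_smul_const Aᵀ t
  have hAE : ∀ t, A * E t = E t * A := fun t =>
    (((Commute.refl A).smul_right t).exp_right)
  have hFA : ∀ t, F t * Aᵀ = Aᵀ * F t := fun t =>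
    (((Commute.refl Aᵀ).smul_right t).exp_right).symm
  set Ltr : Matrix (Fin N) (Fin N) ℝ →L[ℝ] ℝ :=
    LinearMap.toContinuousLinearMap (Matrix.traceLinearMap (Fin N) ℝ ℝ) with hLtr
  have key : ∀ t, HasDerivAt h (-(Matrix.trace (M t * (M t)ᵀ))) t := by
    intro t
    have h1 : HasDerivAt (fun s => E s * X) (A * E t * X) t := (hdE t).mul_const X
    have h2 : HasDerivAt (fun s => E s * X * F s)
        (A * E t * X * F t + E t * X * (F t * Aᵀ)) t := h1.mul (hdF t)
    have h3 : HasDerivAt (fun s => Cᵀ * C * (E s * X * F s))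
        (Cᵀ * C * (A * E t * X * F t + E t * X * (F t * Aᵀ))) t := h2.const_mul _
    have h4 := (Ltr.hasFDerivAt).comp_hasDerivAt t h3
    have h5 : HasDerivAt h
        (Matrix.trace (Cᵀ * C * (A * E t * X * F t + E t * X * (F t * Aᵀ)))) t := h4
    have hcalc : Cᵀ * C * (A * E t * X * F t + E t * X * (F t * Aᵀ))
        = -(Cᵀ * C * (E t * (B * Bᵀ) * F t)) := by
      have hmid : A * E t * X * F t + E t * X * (F t * Aᵀ)
          = E t * (A * X + X * Aᵀ) * F t := by
        rw [hAE t, hFA t]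
        simp only [Matrix.add_mul, Matrix.mul_add, Matrix.mul_assoc]
      rw [hmid, hX]
      simp only [Matrix.mul_neg, Matrix.neg_mul]
    rw [hcalc] at h5
    have htr2 : Matrix.trace (Cᵀ * C * (E t * (B * Bᵀ) * F t))
        = Matrix.trace (M t * (M t)ᵀ) := by
      rw [hFT t, hM]
      simp only [Matrix.transpose_mul, ← Matrix.mul_assoc]
      rw [Matrix.trace_mul_comm (C * E t * B * Bᵀ * (E t)ᵀ) Cᵀ]
      simp only [← Matrix.mul_assoc]
    have : Matrix.trace (-(Cᵀ * C * (E t * (B * Bᵀ) * F t)))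
        = -(Matrix.trace (M t * (M t)ᵀ)) := by
      rw [Matrix.trace_neg, htr2]
    rwa [this] at h5
  have hdiff : Differentiable ℝ h := fun t => (key t).differentiableAt
  have hderiv : ∀ t, deriv h t = -(Matrix.trace (M t * (M t)ᵀ)) := fun t => (key t).deriv
  have hanti : Antitone h := by
    refine antitone_of_deriv_nonpos hdiff fun t => ?_
    rw [hderiv t]
    exact neg_nonpos.mpr (trace_mul_transpose_nonneg _)
  have hE1 : E 0 = 1 := by rw [hE]; simp only [zero_smul, exp_zero]
  have hF1 : F 0 = 1 := by rw [hF]; simp only [zero_smul, exp_zero]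
  have h0 : h 0 = 0 := by
    rw [hh]
    simp only [hE1, hF1, Matrix.one_mul, Matrix.mul_one]
    exact htr
  -- limit at infinity
  have hE0 : Tendsto E atTop (𝓝 0) := exp_real_tendsto_zero A hA
  have hF0 : Tendsto F atTop (𝓝 0) := by
    have := hE0
    have htp : Tendsto (fun t => (E t)ᵀ) atTop (𝓝 (0 : Matrix (Fin N) (Fin N) ℝ)ᵀ) := by
      exact ((Continuous.matrix_transpose continuous_id).tendsto _).comp hE0
    rw [Matrix.transpose_zero] at htp
    exact htp.congr fun t => (hFT t).symm
  have hlim : Tendsto h atTop (𝓝 0) := by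
    have hg : Continuous (fun p : Matrix (Fin N) (Fin N) ℝ × Matrix (Fin N) (Fin N) ℝ =>
        Matrix.trace (Cᵀ * C * (p.1 * X * p.2))) := by
      refine Continuous.matrix_trace ?_
      exact Continuous.matrix_mul continuous_const
        ((continuous_fst.matrix_mul continuous_const).matrix_mul continuous_snd)
    have hpair : Tendsto (fun t => (E t, F t)) atTop
        (𝓝 ((0 : Matrix (Fin N) (Fin N) ℝ), (0 : Matrix (Fin N) (Fin N) ℝ))) :=
      hE0.prodMk_nhds hF0
    have := (hg.tendsto _).comp hpair
    simpa [hh, Function.comp_def] using this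
  have hz : ∀ t, 0 ≤ t → h t = 0 := fun t ht =>
    le_antisymm (h0 ▸ hanti ht) (h0 ▸ hanti.le_of_tendsto hlim t)
  have hMz : ∀ t, 0 < t → M t = 0 := by
    intro t ht
    have hloc : h =ᶠ[𝓝 t] fun _ => 0 := by
      filter_upwards [IsOpen.mem_nhds isOpen_Ioi ht] with s hs
      exact hz s (le_of_lt hs)
    have hd0 : deriv h t = 0 := by
      rw [hloc.deriv_eq]
      simp
    rw [hderiv t, neg_eq_zero] at hd0
    exact eq_zero_of_trace_mul_transpose _ hd0
  have hM0 : M 0 = 0 := by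
    have hcontE : Continuous E := by
      rw [hE]
      exact exp_continuous.comp (continuous_id.smul continuous_const)
    have hcontM : Continuous M := by
      rw [hM]
      exact (continuous_const.matrix_mul hcontE).matrix_mul continuous_const
    have h1 : Tendsto M (𝓝[>] 0) (𝓝 (M 0)) :=
      (hcontM.tendsto 0).mono_left nhdsWithin_le_nhds
    have h2 : Tendsto M (𝓝[>] 0) (𝓝 0) := by
      refine tendsto_const_nhds.congr' ?_
      filter_upwards [self_mem_nhdsWithin] with s hs using (hMz s hs).symm
    exact tendsto_nhds_unique h1 h2
  constructor
  · intro t ht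
    rcases eq_or_lt_of_le ht with rfl | hlt
    · exact hM0
    · exact hMz t hlt
  · have := hM0
    rw [hM] at this
    simp only [hE1, Matrix.mul_one] at this
    exact this
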